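/- Let C ⊂ S^2 be a spherically convex body with diameter at most π/2. Then the diameter of the set E(C) of extreme points of C equals the diameter of C. -/

import Mathlib

noncomputable section

/-- Euclidean space ℝⁿ. -/
abbrev Esp (n : ℕ) := EuclideanSpace ℝ (Fin n)

/-- The unit sphere in ℝⁿ. -/
def uSphere (n : ℕ) : Set (Esp n) := {x | ‖x‖ = 1}

/-- Geodesic (angular) distance between unit vectors. -/
def sdist {n : ℕ} (a b : Esp n) : ℝ := Real.arccos (inner ℝ a b : ℝ)

/-- Closed hemisphere with center `m`. -/
def Hemi {n : ℕ} (m : Esp n) : Set (Esp n) := {x ∈ uSphere n | 0 ≤ (inner ℝ m x : ℝ)}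

/-- The great sphere (great circle for n = 3) bounding the hemisphere centered at `m`. -/
def gSphere {n : ℕ} (m : Esp n) : Set (Esp n) := {x ∈ uSphere n | (inner ℝ m x : ℝ) = 0}

/-- The shorter great-circle arc between `a` and `b`: points through which a
minimizing geodesic from `a` to `b` passes. -/
def Arc {n : ℕ} (a b : Esp n) : Set (Esp n) :=
  {x ∈ uSphere n | sdist a x + sdist x b = sdist a b}

/-- Spherically convex set: contained in the sphere, no antipodal pairs, and
closed under taking shorter arcs. -/
def SphConvex {n : ℕ} (C : Set (Esp n)) : Prop :=
  C ⊆ uSphere n ∧ (∀ x ∈ C, -x ∉ C) ∧ ∀ a ∈ C, ∀ b ∈ C, Arc a b ⊆ C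

/-- Interior of a subset of the sphere relative to the sphere. -/
def sphInterior {n : ℕ} (C : Set (Esp n)) : Set (Esp n) :=
  {x ∈ uSphere n | ∃ ε > 0, ∀ y ∈ uSphere n, dist y x < ε → y ∈ C}

/-- Spherical convex body: closed, spherically convex, with nonempty interior
relative to the sphere. -/
def SphBody {n : ℕ} (C : Set (Esp n)) : Prop :=
  SphConvex C ∧ IsClosed C ∧ (sphInterior C).Nonempty

/-- Boundary of a closed subset of the sphere relative to the sphere. -/
def sphBoundary {n : ℕ} (C : Set (Esp n)) : Set (Esp n) := C \ sphInterior C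

/-- `g`, `h` are centers of two distinct non-opposite hemispheres. -/
def IsLune {n : ℕ} (g h : Esp n) : Prop :=
  g ∈ uSphere n ∧ h ∈ uSphere n ∧ g ≠ h ∧ g ≠ -h

/-- The lune determined by hemisphere centers `g` and `h`. -/
def Lune {n : ℕ} (g h : Esp n) : Set (Esp n) := Hemi g ∩ Hemi h

/-- The (d-1)-dimensional hemisphere `G/H` bounding the lune `G ∩ H`:
part of the great sphere of `G` lying in `H`.  (A semicircle when n = 3.) -/
def semic {n : ℕ} (g h : Esp n) : Set (Esp n) :=
  {x ∈ uSphere n | (inner ℝ g x : ℝ) = 0 ∧ 0 ≤ (inner ℝ h x : ℝ)}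

/-- The center of the bounding hemisphere `G/H` of the lune `G ∩ H`:
the normalized projection of `h` onto the hyperplane orthogonal to `g`. -/
def scCenter {n : ℕ} (g h : Esp n) : Esp n :=
  ‖h - (inner ℝ g h : ℝ) • g‖⁻¹ • (h - (inner ℝ g h : ℝ) • g)

/-- Thickness of a lune: distance between the centers of its two bounding
hemispheres. -/
def lthick {n : ℕ} (g h : Esp n) : ℝ := sdist (scCenter g h) (scCenter h g)

/-- Thickness of a convex body: minimal thickness of a lune containing it. -/
def thick {n : ℕ} (C : Set (Esp n)) : ℝ :=
  sInf {t | ∃ g h, IsLune g h ∧ C ⊆ Lune g h ∧ lthick g h = t}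

/-- Reduced spherical body. -/
def Reduced {n : ℕ} (R : Set (Esp n)) : Prop :=
  SphBody R ∧ ∀ Z, SphBody Z → Z ⊆ R → Z ≠ R → thick Z < thick R

/-- Geodesic diameter of a set on the sphere. -/
def sdiam {n : ℕ} (C : Set (Esp n)) : ℝ :=
  sSup {t | ∃ a ∈ C, ∃ b ∈ C, sdist a b = t}

/-- The hemisphere centered at `m` supports `C` at `p`. -/
def SupportsAt {n : ℕ} (C : Set (Esp n)) (m p : Esp n) : Prop :=
  m ∈ uSphere n ∧ C ⊆ Hemi m ∧ p ∈ C ∧ (inner ℝ m p : ℝ) = 0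

/-- The hemisphere centered at `m` supports `C`. -/
def Supports {n : ℕ} (C : Set (Esp n)) (m : Esp n) : Prop := ∃ p, SupportsAt C m p

/-- The width of `C` determined by the supporting hemisphere centered at `m`:
minimal thickness of a lune `M ∩ M*` over supporting hemispheres `M*` of `C`. -/
def sWidth {n : ℕ} (C : Set (Esp n)) (m : Esp n) : ℝ :=
  sInf {t | ∃ h, Supports C h ∧ IsLune m h ∧ C ⊆ Lune m h ∧ lthick m h = t}

/-- `C` is of constant width `w`. -/
def ConstWidth {n : ℕ} (C : Set (Esp n)) (w : ℝ) : Prop :=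
  ∀ m, Supports C m → sWidth C m = w

/-- Extreme point of a spherically convex set. -/
def ExtremeP {n : ℕ} (C : Set (Esp n)) (e : Esp n) : Prop :=
  e ∈ C ∧ ∀ a ∈ C, ∀ b ∈ C, e ∈ Arc a b → e = a ∨ e = b

/-- `p` is a smooth boundary point: exactly one hemisphere supports `C` at `p`. -/
def SmoothPoint {n : ℕ} (C : Set (Esp n)) (p : Esp n) : Prop :=
  ∃! m, SupportsAt C m p

/-- Strict convexity: the boundary contains no nondegenerate great-circle arc. -/
def StrictlyConvexS {n : ℕ} (C : Set (Esp n)) : Prop :=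
  ∀ a ∈ sphBoundary C, ∀ b ∈ sphBoundary C, Arc a b ⊆ sphBoundary C → a = b

end


section Helpers

open Real

local notation "⟪" x ", " y "⟫" => @inner ℝ _ _ x y

lemma inner_bounds {n : ℕ} {x y : Esp n} (hx : ‖x‖ = 1) (hy : ‖y‖ = 1) :
    -1 ≤ ⟪x, y⟫ ∧ ⟪x, y⟫ ≤ 1 := by
  have h := abs_real_inner_le_norm x y
  rw [hx, hy] at h
  constructor <;> [linarith [neg_abs_le (⟪x, y⟫ : ℝ)]; linarith [le_abs_self (⟪x, y⟫ : ℝ)]]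

lemma cos_sdist {n : ℕ} {x y : Esp n} (hx : ‖x‖ = 1) (hy : ‖y‖ = 1) :
    Real.cos (sdist x y) = ⟪x, y⟫ :=
  Real.cos_arccos (inner_bounds hx hy).1 (inner_bounds hx hy).2

lemma sdist_comm {n : ℕ} (x y : Esp n) : sdist x y = sdist y x := by
  unfold sdist; rw [real_inner_comm]

lemma sdist_nonneg' {n : ℕ} (x y : Esp n) : 0 ≤ sdist x y := Real.arccos_nonneg _

lemma sdist_le_pi' {n : ℕ} (x y : Esp n) : sdist x y ≤ Real.pi := Real.arccos_le_pi _

lemma sdist_eq_zero_iff {n : ℕ} {x y : Esp n} (hx : ‖x‖ = 1) (hy : ‖y‖ = 1) :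
    sdist x y = 0 ↔ x = y := by
  unfold sdist
  rw [Real.arccos_eq_zero]
  constructor
  · intro h
    exact (inner_eq_one_iff_of_norm_eq_one hx hy).1 (le_antisymm (inner_bounds hx hy).2 h)
  · intro h; rw [h, real_inner_self_eq_norm_sq, hy]; norm_num

lemma sdist_lt_pi {n : ℕ} {x y : Esp n} (hx : ‖x‖ = 1) (hy : ‖y‖ = 1) (hxy : x ≠ -y) :
    sdist x y < Real.pi := by
  rcases lt_or_eq_of_le (sdist_le_pi' x y) with h | h
  · exact h
  exfalso
  have h1 : (⟪x, y⟫ : ℝ) ≤ -1 := Real.arccos_eq_pi.1 h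
  have h2 : (⟪x, y⟫ : ℝ) = -1 := le_antisymm h1 (inner_bounds hx hy).1
  have h3 : (⟪x, -y⟫ : ℝ) = 1 := by rw [inner_neg_right, h2]; norm_num
  exact hxy ((inner_eq_one_iff_of_norm_eq_one hx (by rw [norm_neg]; exact hy)).1 h3)

private lemma trig_aux (a b c d : ℝ) (h1 : a^2+b^2=1) (h2 : c^2+d^2=1) (hD : a*d+b*c ≠ 0) :
    1 - 2*(c/(a*d+b*c))*b - 2*(a/(a*d+b*c))*d + (c/(a*d+b*c))^2
      + 2*(c/(a*d+b*c))*(a/(a*d+b*c))*(b*d - a*c) + (a/(a*d+b*c))^2 = 0 := by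
  have expand2 : 1 - 2*(c/(a*d+b*c))*b - 2*(a/(a*d+b*c))*d + (c/(a*d+b*c))^2
      + 2*(c/(a*d+b*c))*(a/(a*d+b*c))*(b*d - a*c) + (a/(a*d+b*c))^2
      = ((a*d+b*c)^2 - 2*c*(a*d+b*c)*b - 2*a*(a*d+b*c)*d + c^2 + 2*c*a*(b*d-a*c) + a^2) / (a*d+b*c)^2 := by
    rw [eq_div_iff (pow_ne_zero 2 hD)]
    have hDi : (a*d+b*c) * (a*d+b*c)⁻¹ = 1 := mul_inv_cancel₀ hD
    simp only [div_eq_mul_inv]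
    linear_combination (-2*c*b*(a*d+b*c) - 2*a*d*(a*d+b*c)
      + (c^2 + 2*c*a*(b*d-a*c) + a^2) * ((a*d+b*c) * (a*d+b*c)⁻¹ + 1)) * hDi
  rw [expand2]
  have hnum : (a*d+b*c)^2 - 2*c*(a*d+b*c)*b - 2*a*(a*d+b*c)*d + c^2 + 2*c*a*(b*d-a*c) + a^2 = 0 := by
    linear_combination (-(c^2))*h1 + (-(a^2))*h2
  rw [hnum, zero_div]

lemma arc_decomp {p q z : Esp 3} (hp : ‖p‖ = 1) (hq : ‖q‖ = 1) (hz : ‖z‖ = 1)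
    (hpq : p ≠ -q) (hzp : z ≠ p) (hzq : z ≠ q)
    (harc : sdist p z + sdist z q = sdist p q) :
    ∃ α β : ℝ, 0 < α ∧ 0 < β ∧ 1 < α + β ∧ z = α • p + β • q := by
  set s := sdist p z with hs
  set t := sdist z q with ht
  have hs0 : 0 < s := by
    rcases lt_or_eq_of_le (sdist_nonneg' p z) with h | h
    · exact h
    · exact absurd ((sdist_eq_zero_iff hp hz).1 h.symm).symm hzp
  have ht0 : 0 < t := by
    rcases lt_or_eq_of_le (sdist_nonneg' z q) with h | h
    · exact h
    · exact absurd ((sdist_eq_zero_iff hz hq).1 h.symm) hzq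
  have hstpi : s + t < Real.pi := harc ▸ sdist_lt_pi hp hq hpq
  have hsin_s : 0 < Real.sin s := Real.sin_pos_of_pos_of_lt_pi hs0 (by linarith)
  have hsin_t : 0 < Real.sin t := Real.sin_pos_of_pos_of_lt_pi ht0 (by linarith)
  have hsin_st : 0 < Real.sin (s + t) := Real.sin_pos_of_pos_of_lt_pi (by linarith) hstpi
  have hcs : Real.cos s < 1 := by
    nlinarith [Real.sin_sq_add_cos_sq s, Real.neg_one_le_cos s]
  have hct : Real.cos t < 1 := by
    nlinarith [Real.sin_sq_add_cos_sq t, Real.neg_one_le_cos t]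
  refine ⟨Real.sin t / Real.sin (s + t), Real.sin s / Real.sin (s + t),
    div_pos hsin_t hsin_st, div_pos hsin_s hsin_st, ?_, ?_⟩
  · rw [← add_div, lt_div_iff₀ hsin_st, one_mul, Real.sin_add]
    nlinarith [Real.cos_le_one s, Real.cos_le_one t]
  · set α := Real.sin t / Real.sin (s + t) with hα
    set β := Real.sin s / Real.sin (s + t) with hβ
    have hpz : (⟪p, z⟫ : ℝ) = Real.cos s := (cos_sdist hp hz).symm
    have hzq' : (⟪z, q⟫ : ℝ) = Real.cos t := (cos_sdist hz hq).symm
    have hpq' : (⟪p, q⟫ : ℝ) = Real.cos (s + t) := by rw [harc]; exact (cos_sdist hp hq).symm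
    have hzz : (⟪z, z⟫ : ℝ) = 1 := by rw [real_inner_self_eq_norm_sq, hz]; norm_num
    have hppi : (⟪p, p⟫ : ℝ) = 1 := by rw [real_inner_self_eq_norm_sq, hp]; norm_num
    have hqqi : (⟪q, q⟫ : ℝ) = 1 := by rw [real_inner_self_eq_norm_sq, hq]; norm_num
    have hzp' : (⟪z, p⟫ : ℝ) = Real.cos s := by rw [real_inner_comm]; exact hpz
    have hqz : (⟪q, z⟫ : ℝ) = Real.cos t := by rw [real_inner_comm]; exact hzq'
    have hqp : (⟪q, p⟫ : ℝ) = Real.cos (s + t) := by rw [real_inner_comm]; exact hpq'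
    have hw : z - (α • p + β • q) = 0 := by
      rw [← inner_self_eq_zero (𝕜 := ℝ)]
      have expand : (⟪z - (α • p + β • q), z - (α • p + β • q)⟫ : ℝ)
          = 1 - 2*α*Real.cos s - 2*β*Real.cos t + α^2 + 2*α*β*Real.cos (s+t) + β^2 := by
        simp only [inner_sub_left, inner_sub_right, inner_add_left, inner_add_right,
          real_inner_smul_left, real_inner_smul_right, hpz, hzq', hpq', hzz, hppi, hqqi,
          hzp', hqz, hqp]
        ring
      rw [expand, hα, hβ, Real.sin_add, Real.cos_add]
      have hDne : Real.sin s * Real.cos t + Real.cos s * Real.sin t ≠ 0 := by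
        rw [← Real.sin_add]; exact ne_of_gt hsin_st
      exact trig_aux (Real.sin s) (Real.cos s) (Real.sin t) (Real.cos t)
        (Real.sin_sq_add_cos_sq s) (Real.sin_sq_add_cos_sq t) hDne
    exact sub_eq_zero.1 hw

lemma comb_zero {n : ℕ} {u p q z : Esp n} {α β c : ℝ} (hα : 0 < α) (hβ : 0 < β)
    (hαβ : 1 < α + β) (hz : z = α • p + β • q) (hc : (⟪u, z⟫ : ℝ) = c)
    (hcp : c ≤ ⟪u, p⟫) (hcq : c ≤ ⟪u, q⟫) (h0 : 0 ≤ c) :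
    (⟪u, p⟫ : ℝ) = 0 ∧ (⟪u, q⟫ : ℝ) = 0 ∧ c = 0 := by
  have hexp : (⟪u, z⟫ : ℝ) = α * ⟪u, p⟫ + β * ⟪u, q⟫ := by
    rw [hz, inner_add_right, real_inner_smul_right, real_inner_smul_right]
  rw [hc] at hexp
  have hc0 : c = 0 := by nlinarith
  subst hc0
  constructor
  · nlinarith
  constructor
  · nlinarith
  · rfl

lemma orth_pair {b m p q : Esp 3} (hb : ‖b‖ = 1) (hm : ‖m‖ = 1) (hp : ‖p‖ = 1)
    (hq : ‖q‖ = 1) (hmb : m ≠ b) (hmb' : m ≠ -b)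
    (h1 : (⟪b, p⟫ : ℝ) = 0) (h2 : (⟪m, p⟫ : ℝ) = 0)
    (h3 : (⟪b, q⟫ : ℝ) = 0) (h4 : (⟪m, q⟫ : ℝ) = 0) : q = p ∨ q = -p := by
  have hm0 : m ≠ 0 := by intro h; rw [h, norm_zero] at hm; norm_num at hm
  have hind : LinearIndependent ℝ ![b, m] := by
    rw [linearIndependent_fin2]
    simp only [Matrix.cons_val_zero, Matrix.cons_val_one, Matrix.head_cons]
    refine ⟨hm0, fun a hab => ?_⟩
    have hnb : ‖b‖ = |a| * ‖m‖ := by rw [← hab, norm_smul, Real.norm_eq_abs]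
    rw [hb, hm, mul_one] at hnb
    rcases (abs_eq (by norm_num : (0:ℝ) ≤ 1)).1 hnb.symm with h | h
    · rw [h, one_smul] at hab; exact hmb hab
    · rw [h, neg_one_smul] at hab
      exact hmb' (by rw [← hab, neg_neg])
  set W : Submodule ℝ (Esp 3) := Submodule.span ℝ (Set.range ![b, m]) with hW
  have hWfin : Module.finrank ℝ W = 2 := by
    rw [hW, finrank_span_eq_card hind, Fintype.card_fin]
  have htot : Module.finrank ℝ W + Module.finrank ℝ Wᗮ = 3 := by
    rw [W.finrank_add_finrank_orthogonal, finrank_euclideanSpace_fin]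
  have hWorth : Module.finrank ℝ Wᗮ = 1 := by omega
  have hmemorth : ∀ x : Esp 3, (⟪b, x⟫ : ℝ) = 0 → (⟪m, x⟫ : ℝ) = 0 → x ∈ Wᗮ := by
    intro x hxb hxm
    rw [Submodule.mem_orthogonal]
    intro u hu
    induction hu using Submodule.span_induction with
    | mem v hv =>
      rcases hv with ⟨i, rfl⟩
      fin_cases i
      · simpa using hxb
      · simpa using hxm
    | zero => simp
    | add v w _ _ hv hw => rw [inner_add_left, hv, hw]; ring
    | smul r v _ hv => rw [real_inner_smul_left, hv]; ring
  have hpW : p ∈ Wᗮ := hmemorth p h1 h2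
  have hqW : q ∈ Wᗮ := hmemorth q h3 h4
  have hp0 : p ≠ 0 := by intro h; rw [h, norm_zero] at hp; norm_num at hp
  have hle : (ℝ ∙ p) ≤ Wᗮ := (Submodule.span_singleton_le_iff_mem p Wᗮ).2 hpW
  have heq : (ℝ ∙ p) = Wᗮ := Submodule.eq_of_le_of_finrank_le hle
    (by rw [hWorth, finrank_span_singleton hp0])
  have hq' : q ∈ (ℝ ∙ p) := heq ▸ hqW
  obtain ⟨r, hr⟩ := Submodule.mem_span_singleton.1 hq'
  have : ‖q‖ = |r| * ‖p‖ := by rw [← hr, norm_smul, Real.norm_eq_abs]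
  rw [hp, hq, mul_one] at this
  rcases abs_eq (by norm_num : (0:ℝ) ≤ 1) |>.1 this.symm with h | h
  · left; rw [← hr, h, one_smul]
  · right; rw [← hr, h, neg_one_smul]

lemma key_extreme (C : Set (Esp 3)) (hC : SphBody C) (hd : sdiam C ≤ Real.pi / 2)
    (hsub : ∀ x ∈ C, ∀ y ∈ C, sdist x y ≤ sdiam C)
    {a b : Esp 3} (ha : a ∈ C) (hb : b ∈ C) (hab : sdist a b = sdiam C)
    (hD : 0 < sdiam C) :
    ∃ e, ExtremeP C e ∧ sdist e b = sdiam C := by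
  obtain ⟨⟨hCsub, hCanti, hCarc⟩, hCcl, -⟩ := hC
  have unit : ∀ x ∈ C, ‖x‖ = 1 := fun x hx => hCsub hx
  have hpi : sdiam C ≤ Real.pi := le_trans hd (by linarith [Real.pi_pos])
  set D := sdiam C with hDdef
  set F : Set (Esp 3) := {x | x ∈ C ∧ sdist x b = D} with hF
  have hFne : F.Nonempty := ⟨a, ha, hab⟩
  have hcont : Continuous fun x : Esp 3 => sdist x b := by
    unfold sdist
    exact Real.continuous_arccos.comp (continuous_id.inner continuous_const)
  have hFclosed : IsClosed F := by
    have : F = C ∩ {x | sdist x b = D} := rfl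
    rw [this]
    exact hCcl.inter (isClosed_eq hcont continuous_const)
  have hFbdd : Bornology.IsBounded F := by
    refine (Metric.isBounded_closedBall (x := (0 : Esp 3)) (r := 1)).subset ?_
    intro x hx
    exact mem_closedBall_zero_iff.2 (le_of_eq (unit x hx.1))
  have hFcpt : IsCompact F := Metric.isCompact_of_isClosed_isBounded hFclosed hFbdd
  obtain ⟨x₀, hx₀F, hmin⟩ := hFcpt.exists_isMinOn hFne
    ((continuous_const.inner continuous_id).continuousOn
      (f := fun x : Esp 3 => (inner ℝ a x : ℝ)))
  have hx₀C : x₀ ∈ C := hx₀F.1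
  refine ⟨x₀, ⟨hx₀C, ?_⟩, hx₀F.2⟩
  intro p hp q hq harcmem
  by_contra hne
  push_neg at hne
  obtain ⟨hne1, hne2⟩ := hne
  have hpq : p ≠ q := by
    rintro rfl
    apply hne1
    have hpp : sdist p p = 0 := (sdist_eq_zero_iff (unit p hp) (unit p hp)).2 rfl
    have hsum := harcmem.2
    rw [hpp] at hsum
    have h1 : sdist p x₀ = 0 := by
      have := sdist_nonneg' p x₀
      have := sdist_nonneg' x₀ p
      linarith
    exact ((sdist_eq_zero_iff (unit p hp) (unit x₀ hx₀C)).1 h1).symm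
  have hpnq : p ≠ -q := fun h => hCanti q hq (h ▸ hp)
  obtain ⟨α, β, hα, hβ, hαβ, hzdec⟩ :=
    arc_decomp (unit p hp) (unit q hq) (unit x₀ hx₀C) hpnq hne1 hne2 harcmem.2
  -- level 1 : u = b
  have hcosD0 : 0 ≤ Real.cos D :=
    Real.cos_nonneg_of_mem_Icc ⟨by linarith [Real.pi_pos], hd⟩
  have hbx₀ : (inner ℝ b x₀ : ℝ) = Real.cos D := by
    rw [real_inner_comm, ← cos_sdist (unit x₀ hx₀C) (unit b hb), hx₀F.2]
  have lev1 : ∀ x ∈ C, Real.cos D ≤ (inner ℝ b x : ℝ) := by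
    intro x hx
    have h1 : sdist x b ≤ D := hsub x hx b hb
    have h2 := Real.cos_le_cos_of_nonneg_of_le_pi (sdist_nonneg' x b) hpi h1
    rwa [cos_sdist (unit x hx) (unit b hb), real_inner_comm] at h2
  obtain ⟨hbp0, hbq0, hcosD⟩ :=
    comb_zero hα hβ hαβ hzdec hbx₀ (lev1 p hp) (lev1 q hq) hcosD0
  have hDpi2 : D = Real.pi / 2 := by
    have harcc : Real.arccos (Real.cos D) = D := Real.arccos_cos (le_of_lt hD) hpi
    rw [hcosD, Real.arccos_zero] at harcc
    exact harcc.symm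
  have hmemF : ∀ x ∈ C, (inner ℝ b x : ℝ) = 0 → x ∈ F := by
    intro x hx hx0
    refine ⟨hx, ?_⟩
    unfold sdist
    rw [real_inner_comm, hx0, Real.arccos_zero, hDpi2]
  have hpF : p ∈ F := hmemF p hp hbp0
  have hqF : q ∈ F := hmemF q hq hbq0
  -- level 2 : u = a
  have hax₀ : (0 : ℝ) ≤ (inner ℝ a x₀ : ℝ) := by
    have h1 : sdist a x₀ ≤ D := hsub a ha x₀ hx₀C
    have h2 : 0 ≤ Real.cos (sdist a x₀) :=
      Real.cos_nonneg_of_mem_Icc ⟨by linarith [Real.pi_pos, sdist_nonneg' a x₀], by linarith⟩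
    rwa [cos_sdist (unit a ha) (unit x₀ hx₀C)] at h2
  obtain ⟨hap0, haq0, -⟩ :=
    comb_zero hα hβ hαβ hzdec rfl (isMinOn_iff.1 hmin p hpF) (isMinOn_iff.1 hmin q hqF) hax₀
  have hamb : a ≠ b := by
    intro h
    rw [h] at hab
    rw [(sdist_eq_zero_iff (unit b hb) (unit b hb)).2 rfl] at hab
    exact absurd hab.symm (ne_of_gt hD)
  have hamb' : a ≠ -b := fun h => hCanti b hb (h ▸ ha)
  rcases orth_pair (unit b hb) (unit a ha) (unit p hp) (unit q hq) hamb hamb'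
      hbp0 hap0 hbq0 haq0 with h | h
  · exact hpq h.symm
  · exact hCanti p hp (h ▸ hq)

end Helpers

/-- For a spherical convex body C ⊂ S² of diameter at most π/2, the diameter of
the set of extreme points of C equals the diameter of C. -/
theorem stmt_5 (C : Set (Esp 3)) (hC : SphBody C) (hd : sdiam C ≤ Real.pi / 2) :
    sdiam {e | ExtremeP C e} = sdiam C := by
  have unit : ∀ x ∈ C, ‖x‖ = 1 := fun x hx => hC.1.1 hx
  obtain ⟨x₀, hx₀⟩ := hC.2.2
  have hx₀C : x₀ ∈ C := by
    obtain ⟨hsph, ε, hε, h⟩ := hx₀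
    exact h x₀ hsph (by rw [dist_self]; exact hε)
  have hsdiam : sdiam C = sSup {t | ∃ a ∈ C, ∃ b ∈ C, sdist a b = t} := rfl
  have hSbdd : BddAbove {t | ∃ a ∈ C, ∃ b ∈ C, sdist a b = t} := by
    refine ⟨Real.pi, ?_⟩
    rintro t ⟨a', _, b', _, rfl⟩
    exact sdist_le_pi' _ _
  have hsub : ∀ x ∈ C, ∀ y ∈ C, sdist x y ≤ sdiam C := fun x hx y hy =>
    le_csSup hSbdd ⟨x, hx, y, hy, rfl⟩
  have hx₀x₀ : sdist x₀ x₀ = 0 := (sdist_eq_zero_iff (unit x₀ hx₀C) (unit x₀ hx₀C)).2 rfl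
  have hDnn : 0 ≤ sdiam C := by
    rw [hsdiam]
    exact le_csSup hSbdd ⟨x₀, hx₀C, x₀, hx₀C, hx₀x₀⟩
  rcases eq_or_lt_of_le hDnn with hD0 | hDpos
  · have hall : ∀ x ∈ C, ∀ y ∈ C, x = y := by
      intro x hx y hy
      refine (sdist_eq_zero_iff (unit x hx) (unit y hy)).1
        (le_antisymm ?_ (sdist_nonneg' _ _))
      rw [hD0]
      exact hsub x hx y hy
    have hEeq : {e | ExtremeP C e} = C := by
      ext e
      simp only [Set.mem_setOf_eq]
      constructor
      · exact fun h => h.1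
      · intro he
        exact ⟨he, fun a' ha' b' hb' _ => Or.inl (hall e he a' ha')⟩
    rw [hEeq]
  · have hCcpt : IsCompact C := by
      refine Metric.isCompact_of_isClosed_isBounded hC.2.1 ?_
      refine (Metric.isBounded_closedBall (x := (0 : Esp 3)) (r := 1)).subset ?_
      intro x hx
      exact mem_closedBall_zero_iff.2 (le_of_eq (unit x hx))
    have hcont2 : Continuous fun pr : Esp 3 × Esp 3 => sdist pr.1 pr.2 := by
      unfold sdist
      exact Real.continuous_arccos.comp continuous_inner
    have hSim : {t | ∃ a ∈ C, ∃ b ∈ C, sdist a b = t}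
        = (fun pr : Esp 3 × Esp 3 => sdist pr.1 pr.2) '' (C ×ˢ C) := by
      ext t
      constructor
      · rintro ⟨a', ha', b', hb', rfl⟩
        exact ⟨(a', b'), ⟨ha', hb'⟩, rfl⟩
      · rintro ⟨⟨a', b'⟩, ⟨ha', hb'⟩, rfl⟩
        exact ⟨a', ha', b', hb', rfl⟩
    have hDS : sdiam C ∈ {t | ∃ a ∈ C, ∃ b ∈ C, sdist a b = t} := by
      rw [hsdiam]
      have hScpt : IsCompact {t | ∃ a ∈ C, ∃ b ∈ C, sdist a b = t} := by
        rw [hSim]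
        exact (hCcpt.prod hCcpt).image hcont2
      exact hScpt.sSup_mem ⟨_, x₀, hx₀C, x₀, hx₀C, rfl⟩
    obtain ⟨a, ha, b, hb, hab⟩ := hDS
    obtain ⟨e₁, he₁, he₁d⟩ := key_extreme C hC hd hsub ha hb hab hDpos
    have h2 : sdist b e₁ = sdiam C := by rw [sdist_comm]; exact he₁d
    obtain ⟨e₂, he₂, he₂d⟩ := key_extreme C hC hd hsub hb he₁.1 h2 hDpos
    apply le_antisymm
    · refine csSup_le ⟨_, e₁, he₁, e₁, he₁, rfl⟩ ?_
      rintro t ⟨u, hu, v, hv, rfl⟩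
      exact hsub u hu.1 v hv.1
    · refine le_csSup ⟨Real.pi, ?_⟩ ⟨e₂, he₂, e₁, he₁, he₂d⟩
      rintro t ⟨u, _, v, _, rfl⟩
      exact sdist_le_pi' _ _
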